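/- Let a, b > 0 with b/a ≥ e^(2e), and let x* > e^e be a critical point of U(x) = −a·x + 2b·√(x·ln(ln x)), i.e., −a + b·(1/ln x* + ln(ln x*))/√(x*·ln(ln x*)) = 0. Then, with α = b/a, we have α²·ln(ln α) ≤ x* ≤ 4α²·ln(ln α). -/

import Mathlib

set_option maxHeartbeats 1000000

open Real

/-- if b/a ≥ e^(2e) and x* > e^e is a critical point of
U(x) = -a x + 2b √(x ln ln x), i.e. -a + b (1/ln x* + ln ln x*)/√(x* ln ln x*) = 0,
then with α = b/a : α² ln ln α ≤ x* ≤ 4 α² ln ln α. -/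
theorem stmt16 (a b xstar : ℝ) (ha : 0 < a) (hb : 0 < b)
    (hba : Real.exp (2 * Real.exp 1) ≤ b / a)
    (hx : Real.exp (Real.exp 1) < xstar)
    (hcrit : -a + b * (1 / Real.log xstar + Real.log (Real.log xstar)) /
        Real.sqrt (xstar * Real.log (Real.log xstar)) = 0) :
    (b / a) ^ 2 * Real.log (Real.log (b / a)) ≤ xstar ∧
      xstar ≤ 4 * (b / a) ^ 2 * Real.log (Real.log (b / a)) := by
  set α := b / a with hαdef
  have he9 : (2.7182818283 : ℝ) < Real.exp 1 := Real.exp_one_gt_d9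
  have he9' : Real.exp 1 < 2.7182818286 := Real.exp_one_lt_d9
  have hα0 : 0 < α := div_pos hb ha
  have hα1 : Real.exp (2 * Real.exp 1) ≤ α := hba
  have hα2 : (1 : ℝ) < α := by
    have h := Real.add_one_le_exp (2 * Real.exp 1)
    nlinarith
  have hx0 : 0 < xstar := lt_trans (Real.exp_pos _) hx
  have hlx : Real.exp 1 < Real.log xstar := by
    have := Real.log_lt_log (Real.exp_pos _) hx
    rwa [Real.log_exp] at this
  set lx := Real.log xstar with hlxdef
  have hlx0 : (0 : ℝ) < lx := lt_trans (Real.exp_pos 1) hlx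
  have hL : (1 : ℝ) < Real.log lx := by
    have h := Real.log_lt_log (Real.exp_pos 1) hlx
    rwa [Real.log_exp] at h
  set L := Real.log lx with hLdef
  have hL0 : (0 : ℝ) < L := by linarith
  have hxL0 : 0 < xstar * L := mul_pos hx0 hL0
  have hs0 : 0 < Real.sqrt (xstar * L) := Real.sqrt_pos.mpr hxL0
  -- key squared equation
  have hkey : xstar * L = α ^ 2 * (1 / lx + L) ^ 2 := by
    have h0 : b * (1 / lx + L) / Real.sqrt (xstar * L) = a := by linarith
    have h1 : b * (1 / lx + L) = a * Real.sqrt (xstar * L) := by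
      rw [div_eq_iff (ne_of_gt hs0)] at h0
      linarith
    have h2 : α * (1 / lx + L) = Real.sqrt (xstar * L) := by
      rw [hαdef, div_mul_eq_mul_div, div_eq_iff (ne_of_gt ha)]
      linarith
    have h3 : (α * (1 / lx + L)) ^ 2 = xstar * L := by
      rw [h2, Real.sq_sqrt (le_of_lt hxL0)]
    nlinarith [h3]
  have hinvlx : 0 < 1 / lx := by positivity
  have hα20 : 0 < α ^ 2 := by positivity
  -- lower bound on xstar : α² L < xstar
  have hlow : α ^ 2 * L < xstar := by
    have hlt : L ^ 2 < (1 / lx + L) ^ 2 := by nlinarith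
    have h : α ^ 2 * L ^ 2 < xstar * L := by
      rw [hkey]
      exact mul_lt_mul_of_pos_left hlt hα20
    have h2 : (α ^ 2 * L) * L < xstar * L := by nlinarith [h]
    exact (mul_lt_mul_iff_of_pos_right hL0).mp h2
  -- upper bound : xstar < 2 α² L
  have hup : xstar < 2 * α ^ 2 * L := by
    have ha1 : 1 / lx < 0.38 := by
      rw [div_lt_iff₀ hlx0]
      nlinarith
    have h2 : 1 / lx + L < 1.38 * L := by linarith
    have h3 : (0 : ℝ) < 1 / lx + L := by positivity
    have hsq : (1 / lx + L) ^ 2 < 2 * L ^ 2 := by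
      nlinarith [mul_self_lt_mul_self h3.le h2, hL0]
    have h : xstar * L < α ^ 2 * (2 * L ^ 2) := by
      rw [hkey]
      exact mul_lt_mul_of_pos_left hsq hα20
    have h4 : xstar * L < (2 * α ^ 2 * L) * L := by nlinarith [h]
    exact (mul_lt_mul_iff_of_pos_right hL0).mp h4
  -- log α is at least 2e
  have hs : 2 * Real.exp 1 ≤ Real.log α := by
    rw [← Real.log_exp (2 * Real.exp 1)]
    exact Real.log_le_log (Real.exp_pos _) hα1
  set s := Real.log α with hsdef
  have hs0' : (0 : ℝ) < s := by nlinarith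
  -- α < xstar
  have hαx : α < xstar := by nlinarith [hlow]
  -- log log α < L
  have hLLα : Real.log s < L := by
    have h1 : s < lx := Real.log_lt_log hα0 hαx
    exact Real.log_lt_log hs0' h1
  have hLLα0 : 0 < Real.log s := by
    apply Real.log_pos
    nlinarith
  constructor
  · have h := mul_le_mul_of_nonneg_left hLLα.le hα20.le
    linarith
  · -- need L ≤ 2 log s, i.e. lx ≤ s²
    have hloglx : L ≤ lx / Real.exp 1 := by
      have h2 : Real.log (lx / Real.exp 1) ≤ lx / Real.exp 1 - 1 :=
        Real.log_le_sub_one_of_pos (by positivity)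
      rw [Real.log_div (ne_of_gt hlx0) (ne_of_gt (Real.exp_pos 1)), Real.log_exp] at h2
      linarith
    have hlog2 : Real.log 2 < 0.6931471808 := Real.log_two_lt_d9
    have hlog2' : 0 < Real.log 2 := Real.log_pos (by norm_num)
    have hlogL : Real.log L ≤ L - 1 := Real.log_le_sub_one_of_pos hL0
    have hlxbound : lx < Real.log 2 + 2 * s + L := by
      have h1 : Real.log xstar < Real.log (2 * α ^ 2 * L) := Real.log_lt_log hx0 hup
      have h2 : Real.log (2 * α ^ 2 * L) = Real.log 2 + 2 * s + Real.log L := by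
        rw [Real.log_mul (by positivity) (ne_of_gt hL0),
            Real.log_mul (by norm_num) (by positivity), Real.log_pow]
        push_cast
        rw [← hsdef]
      rw [h2] at h1
      have h4 : lx < Real.log 2 + 2 * s + Real.log L := h1
      linarith
    have hdivbound : lx / Real.exp 1 ≤ lx * 0.37 := by
      rw [div_le_iff₀ (Real.exp_pos 1)]
      nlinarith
    have h2 : lx * 0.63 < Real.log 2 + 2 * s := by linarith
    have hlxs2 : lx ≤ s ^ 2 := by
      nlinarith [mul_nonneg (sub_nonneg.mpr hs) hs0'.le]
    have hL2 : L ≤ 2 * Real.log s := by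
      have h1 : Real.log lx ≤ Real.log (s ^ 2) := Real.log_le_log hlx0 hlxs2
      rwa [Real.log_pow, Nat.cast_ofNat] at h1
    have h := mul_le_mul_of_nonneg_left hL2 hα20.le
    linarith
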